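/- Let x = (i,j) be a right vertex of the infinite hexagonal grid T_H, let p ≥ 5 be an integer, let q be an integer with 0 ≤ q ≤ p−3, and let v be a non-corner vertex of F_{x,p−q}. Then in any 2p-distance coloring f of T_H, at most 1 vertex u with d(x,u) = p+q+1 satisfies f(u) = f(v). -/

import Mathlib

set_option maxHeartbeats 4000000

/-- The infinite hexagonal grid `T_H` on vertex set ℤ×ℤ: `(i,j)` is adjacent to `(i,j±1)`, and
`(i,j)` is adjacent to `(i+1,j)` iff `i+j` is even. -/
def TH : SimpleGraph (ℤ × ℤ) where
  Adj u v :=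
    (u.1 = v.1 ∧ (v.2 = u.2 + 1 ∨ u.2 = v.2 + 1)) ∨
    (u.2 = v.2 ∧ ((v.1 = u.1 + 1 ∧ (u.1 + u.2) % 2 = 0) ∨
                  (u.1 = v.1 + 1 ∧ (v.1 + v.2) % 2 = 0)))
  symm := by
    constructor
    intro u v h
    omega
  loopless := by
    constructor
    intro u h
    omega

/-- An `l`-distance coloring of `T_H`. -/
def IsDistColoring (l : ℕ) (f : ℤ × ℤ → ℕ) : Prop :=
  ∀ u v : ℤ × ℤ, u ≠ v → TH.dist u v ≤ l → f u ≠ f v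

/-- The six corner vertices of `F_{x,k}` for a right vertex `x`. -/
def corners (x : ℤ × ℤ) (k : ℕ) : Set (ℤ × ℤ) :=
  {(x.1, x.2 + (k : ℤ)), (x.1 + ((k+1)/2 : ℕ), x.2 + (k/2 : ℕ)),
   (x.1 + ((k+1)/2 : ℕ), x.2 - (k/2 : ℕ)), (x.1, x.2 - (k : ℤ)),
   (x.1 - (k/2 : ℕ), x.2 - ((k+1)/2 : ℕ)), (x.1 - (k/2 : ℕ), x.2 + ((k+1)/2 : ℕ))}

/-- `S_{x,k}^{2h}`: non-corner vertices of `F_{x,k}` at distance exactly `2h`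
from some corner vertex of `F_{x,k}`. -/
def Sset (x : ℤ × ℤ) (k h : ℕ) : Set (ℤ × ℤ) :=
  {v | TH.dist x v = k ∧ v ∉ corners x k ∧ ∃ u ∈ corners x k, TH.dist v u = 2 * h}

/-! ### Auxiliary machinery: an explicit distance formula for `TH` -/

/-- Explicit distance function from an even ("right") vertex to offset `(a,b)`. -/
def D (a b : ℤ) : ℕ :=
  (max (max (2*a-1) (-2*a)) ((a.natAbs : ℤ) + (b.natAbs : ℤ)) +
    (max (max (2*a-1) (-2*a)) ((a.natAbs : ℤ) + (b.natAbs : ℤ)) - a - b) % 2).toNat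

/-- Weak (purely linear) facts characterizing `D a b ≤ n` together with parity. -/
def DFw (a b n : ℤ) : Prop :=
  2*a-1 ≤ n ∧ -2*a ≤ n ∧ a+b ≤ n ∧ a-b ≤ n ∧ -a+b ≤ n ∧ -a-b ≤ n ∧ n % 2 = (a+b) % 2

/-- Full linear characterization of `D a b = n`. -/
def DF (a b n : ℤ) : Prop :=
  DFw a b n ∧ (n ≤ 2*a ∨ n ≤ -2*a+1 ∨ n ≤ a+b+1 ∨ n ≤ a-b+1 ∨ n ≤ -a+b+1 ∨ n ≤ -a-b+1)

lemma D_eq_iff (a b : ℤ) (n : ℕ) : D a b = n ↔ DF a b (n : ℤ) := by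
  unfold DF DFw D
  omega

lemma D_le_of (a b : ℤ) (n : ℕ) (h : DFw a b (n : ℤ)) : D a b ≤ n := by
  unfold DFw at h
  unfold D
  omega

lemma TH_adj_iff (u v : ℤ × ℤ) : TH.Adj u v ↔
    ((u.1 = v.1 ∧ (v.2 = u.2 + 1 ∨ u.2 = v.2 + 1)) ∨
    (u.2 = v.2 ∧ ((v.1 = u.1 + 1 ∧ (u.1 + u.2) % 2 = 0) ∨
                  (u.1 = v.1 + 1 ∧ (v.1 + v.2) % 2 = 0)))) := Iff.rfl

lemma exists_walk (i j : ℤ) (hx : (i + j) % 2 = 0) :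
    ∀ n (a b : ℤ), D a b = n → ∃ p : TH.Walk (i, j) (i + a, j + b), p.length = n := by
  intro n
  induction n with
  | zero =>
    intro a b h
    rw [D_eq_iff] at h
    have hab : a = 0 ∧ b = 0 := by unfold DF DFw at h; omega
    obtain ⟨rfl, rfl⟩ := hab
    exact ⟨SimpleGraph.Walk.nil.copy rfl (by simp), by simp⟩
  | succ n ih =>
    intro a b h
    rw [D_eq_iff] at h
    obtain ⟨a', b', hD, hadj⟩ :
        ∃ a' b' : ℤ, D a' b' = n ∧ TH.Adj (i + a', j + b') (i + a, j + b) := by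
      by_cases h1 : 0 < a ∧ (a + b) % 2 = 1
      · exact ⟨a - 1, b, by rw [D_eq_iff]; unfold DF DFw at h ⊢; omega,
          by rw [TH_adj_iff]; dsimp only; omega⟩
      by_cases h2 : a < 0 ∧ (a + b) % 2 = 0
      · exact ⟨a + 1, b, by rw [D_eq_iff]; unfold DF DFw at h ⊢; omega,
          by rw [TH_adj_iff]; dsimp only; omega⟩
      by_cases h3 : 0 < b
      · exact ⟨a, b - 1, by rw [D_eq_iff]; unfold DF DFw at h ⊢; omega,
          by rw [TH_adj_iff]; dsimp only; omega⟩
      by_cases h4 : b < 0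
      · exact ⟨a, b + 1, by rw [D_eq_iff]; unfold DF DFw at h ⊢; omega,
          by rw [TH_adj_iff]; dsimp only; omega⟩
      · exact ⟨a, 1, by rw [D_eq_iff]; unfold DF DFw at h ⊢; omega,
          by rw [TH_adj_iff]; dsimp only; omega⟩
    obtain ⟨p, hp⟩ := ih a' b' hD
    exact ⟨p.concat hadj, by simp [SimpleGraph.Walk.length_concat, hp]⟩

lemma D_nbr (i j : ℤ) (hx : (i + j) % 2 = 0) (u w : ℤ × ℤ) (h : TH.Adj u w) :
    D (u.1 - i) (u.2 - j) ≤ D (w.1 - i) (w.2 - j) + 1 := by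
  have hw := (D_eq_iff (w.1 - i) (w.2 - j) (D (w.1 - i) (w.2 - j))).mp rfl
  rw [TH_adj_iff] at h
  apply D_le_of
  unfold DF DFw at hw
  unfold DFw
  push_cast
  omega

lemma D_le_walk (i j : ℤ) (hx : (i + j) % 2 = 0) :
    ∀ (t s : ℤ × ℤ) (w : TH.Walk t s), s = (i, j) → D (t.1 - i) (t.2 - j) ≤ w.length := by
  intro t s w
  induction w with
  | nil =>
    rintro rfl
    simp only [SimpleGraph.Walk.length_nil]
    show D (i - i) (j - j) ≤ 0
    have h0 : D (i - i) (j - j) = 0 := by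
      rw [D_eq_iff]; unfold DF DFw; omega
    omega
  | @cons t y z hadj w ih =>
    intro hs
    simp only [SimpleGraph.Walk.length_cons]
    have h1 := D_nbr i j hx t y hadj
    have h2 := ih hs
    omega

lemma dist_even (i j a b : ℤ) (hx : (i + j) % 2 = 0) :
    TH.dist (i, j) (i + a, j + b) = D a b := by
  obtain ⟨w, hw⟩ := exists_walk i j hx (D a b) a b rfl
  apply le_antisymm
  · simpa [hw] using SimpleGraph.dist_le w
  · have hr : TH.Reachable (i, j) (i + a, j + b) := ⟨w⟩
    obtain ⟨w2, hw2⟩ := hr.exists_walk_length_eq_dist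
    have h3 := D_le_walk i j hx (i + a, j + b) (i, j) w2.reverse rfl
    simp only [SimpleGraph.Walk.length_reverse, hw2] at h3
    simpa using h3

lemma TH_reach0 (w : ℤ × ℤ) : TH.Reachable (0, 0) w := by
  obtain ⟨p, -⟩ := exists_walk 0 0 (by decide) (D w.1 w.2) w.1 w.2 rfl
  exact ⟨p.copy rfl (by simp)⟩

lemma TH_connected : TH.Connected := by
  constructor
  intro u v
  exact (TH_reach0 u).symm.trans (TH_reach0 v)

/-- The reflection `(i,j) ↦ (-i, j+1)` is an automorphism of `TH`. -/
def thPhi : TH ≃g TH where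
  toFun v := (-v.1, v.2 + 1)
  invFun v := (-v.1, v.2 - 1)
  left_inv v := by simp
  right_inv v := by simp
  map_rel_iff' := by
    intro u v
    obtain ⟨u1, u2⟩ := u
    obtain ⟨v1, v2⟩ := v
    rw [Equiv.coe_fn_mk]
    rw [TH_adj_iff, TH_adj_iff]
    dsimp only
    constructor <;> (intro h; omega)

lemma dist_phi (u v : ℤ × ℤ) : TH.dist (thPhi u) (thPhi v) = TH.dist u v := by
  have key : ∀ (e : TH ≃g TH) (u v : ℤ × ℤ), TH.dist (e u) (e v) ≤ TH.dist u v := by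
    intro e u v
    obtain ⟨w, hw⟩ := TH_connected.exists_walk_length_eq_dist u v
    have := SimpleGraph.dist_le (w.map e.toHom)
    simpa [SimpleGraph.Walk.length_map, hw] using this
  apply le_antisymm (key thPhi u v)
  have := key thPhi.symm (thPhi u) (thPhi v)
  simpa using this

lemma dist_formula0 (x y : ℤ × ℤ) (hx : (x.1 + x.2) % 2 = 0) :
    TH.dist x y = D (y.1 - x.1) (y.2 - x.2) := by
  obtain ⟨x1, x2⟩ := x
  obtain ⟨y1, y2⟩ := y
  have h := dist_even x1 x2 (y1 - x1) (y2 - x2) hx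
  have h1 : x1 + (y1 - x1) = y1 := by ring
  have h2 : x2 + (y2 - x2) = y2 := by ring
  rw [h1, h2] at h
  exact h

lemma dist_formula1 (x y : ℤ × ℤ) (hx : (x.1 + x.2) % 2 = 1) :
    TH.dist x y = D (x.1 - y.1) (y.2 - x.2) := by
  rw [← dist_phi x y]
  have h := dist_formula0 (thPhi x) (thPhi y) (by
    show (-x.1 + (x.2 + 1)) % 2 = 0
    omega)
  rw [h]
  show D (-y.1 - -x.1) (y.2 + 1 - (x.2 + 1)) = _
  have e1 : -y.1 - -x.1 = x.1 - y.1 := by ring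
  have e2 : y.2 + 1 - (x.2 + 1) = y.2 - x.2 := by ring
  rw [e1, e2]

/-! ### Arithmetic localization lemmas -/

lemma classify (p q A B : ℤ) (hq0 : 0 ≤ q) (hq : q + 3 ≤ p)
    (Fv : DF A B (p-q))
    (NC1 : ¬(A = 0 ∧ B = p-q)) (NC4 : ¬(A = 0 ∧ B = -(p-q))) :
    p - q ≤ 2*A ∨ p - q ≤ -2*A+1 ∨ (0 < A ∧ 0 < B ∧ p-q-1 ≤ A+B) ∨
      (A < 0 ∧ 0 < B ∧ p-q-1 ≤ -A+B) ∨ (0 < A ∧ B < 0 ∧ p-q-1 ≤ A-B) ∨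
      (A < 0 ∧ B < 0 ∧ p-q-1 ≤ -A-B) := by
  unfold DF DFw at Fv
  omega

lemma loc_R (p q A B a b : ℤ) (hq0 : 0 ≤ q) (hq : q + 3 ≤ p)
    (hR : p - q ≤ 2*A)
    (Fv : DFw A B (p-q))
    (NC2 : ¬(A = (p-q+1)/2 ∧ B = (p-q)/2)) (NC3 : ¬(A = (p-q+1)/2 ∧ B = -((p-q)/2)))
    (Fu : DFw a b (p+q+1))
    (cr : ((p+q+1) % 2 = 0 ∧ DF (A-a) (B-b) (2*p+1)) ∨
          ((p+q+1) % 2 = 1 ∧ DF (a-A) (B-b) (2*p+1))) :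
    a = -((p+q+1)/2) := by
  unfold DF DFw at *
  omega

lemma loc_L (p q A B a b : ℤ) (hq0 : 0 ≤ q) (hq : q + 3 ≤ p)
    (hL : p - q ≤ -2*A+1)
    (Fv : DFw A B (p-q))
    (NC5 : ¬(A = -((p-q)/2) ∧ B = -((p-q+1)/2))) (NC6 : ¬(A = -((p-q)/2) ∧ B = (p-q+1)/2))
    (Fu : DFw a b (p+q+1))
    (cr : ((p+q+1) % 2 = 0 ∧ DF (A-a) (B-b) (2*p+1)) ∨
          ((p+q+1) % 2 = 1 ∧ DF (a-A) (B-b) (2*p+1))) :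
    a = (p+q+2)/2 := by
  unfold DF DFw at *
  omega

lemma loc_UR (p q A B a b : ℤ) (hq0 : 0 ≤ q) (hq : q + 3 ≤ p)
    (hUR : 0 < A ∧ 0 < B ∧ p-q-1 ≤ A+B)
    (Fv : DFw A B (p-q))
    (NC2 : ¬(A = (p-q+1)/2 ∧ B = (p-q)/2))
    (Fu : DFw a b (p+q+1))
    (cr : ((p+q+1) % 2 = 0 ∧ DF (A-a) (B-b) (2*p+1)) ∨
          ((p+q+1) % 2 = 1 ∧ DF (a-A) (B-b) (2*p+1))) :
    p+q ≤ -a-b := by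
  unfold DF DFw at *
  omega

lemma loc_UL (p q A B a b : ℤ) (hq0 : 0 ≤ q) (hq : q + 3 ≤ p)
    (hUL : A < 0 ∧ 0 < B ∧ p-q-1 ≤ -A+B)
    (Fv : DFw A B (p-q))
    (NC6 : ¬(A = -((p-q)/2) ∧ B = (p-q+1)/2))
    (Fu : DFw a b (p+q+1))
    (cr : ((p+q+1) % 2 = 0 ∧ DF (A-a) (B-b) (2*p+1)) ∨
          ((p+q+1) % 2 = 1 ∧ DF (a-A) (B-b) (2*p+1))) :
    p+q ≤ a-b := by
  unfold DF DFw at *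
  omega

lemma loc_DR (p q A B a b : ℤ) (hq0 : 0 ≤ q) (hq : q + 3 ≤ p)
    (hDR : 0 < A ∧ B < 0 ∧ p-q-1 ≤ A-B)
    (Fv : DFw A B (p-q))
    (NC3 : ¬(A = (p-q+1)/2 ∧ B = -((p-q)/2)))
    (Fu : DFw a b (p+q+1))
    (cr : ((p+q+1) % 2 = 0 ∧ DF (A-a) (B-b) (2*p+1)) ∨
          ((p+q+1) % 2 = 1 ∧ DF (a-A) (B-b) (2*p+1))) :
    p+q ≤ b-a := by
  unfold DF DFw at *
  omega

lemma loc_DL (p q A B a b : ℤ) (hq0 : 0 ≤ q) (hq : q + 3 ≤ p)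
    (hDL : A < 0 ∧ B < 0 ∧ p-q-1 ≤ -A-B)
    (Fv : DFw A B (p-q))
    (NC5 : ¬(A = -((p-q)/2) ∧ B = -((p-q+1)/2)))
    (Fu : DFw a b (p+q+1))
    (cr : ((p+q+1) % 2 = 0 ∧ DF (A-a) (B-b) (2*p+1)) ∨
          ((p+q+1) % 2 = 1 ∧ DF (a-A) (B-b) (2*p+1))) :
    p+q ≤ a+b := by
  unfold DF DFw at *
  omega

lemma bigkey (p q A B a1 b1 a2 b2 : ℤ) (hq0 : 0 ≤ q) (hq : q + 3 ≤ p)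
    (Fv : DF A B (p-q))
    (NC1 : ¬(A = 0 ∧ B = p-q)) (NC2 : ¬(A = (p-q+1)/2 ∧ B = (p-q)/2))
    (NC3 : ¬(A = (p-q+1)/2 ∧ B = -((p-q)/2))) (NC4 : ¬(A = 0 ∧ B = -(p-q)))
    (NC5 : ¬(A = -((p-q)/2) ∧ B = -((p-q+1)/2))) (NC6 : ¬(A = -((p-q)/2) ∧ B = (p-q+1)/2))
    (Fu1 : DFw a1 b1 (p+q+1)) (Fu2 : DFw a2 b2 (p+q+1))
    (cr1 : ((p+q+1) % 2 = 0 ∧ DF (A-a1) (B-b1) (2*p+1)) ∨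
           ((p+q+1) % 2 = 1 ∧ DF (a1-A) (B-b1) (2*p+1)))
    (cr2 : ((p+q+1) % 2 = 0 ∧ DF (A-a2) (B-b2) (2*p+1)) ∨
           ((p+q+1) % 2 = 1 ∧ DF (a2-A) (B-b2) (2*p+1))) :
    DFw (a2-a1) (b2-b1) (2*p) ∧ DFw (a1-a2) (b2-b1) (2*p) := by
  rcases classify p q A B hq0 hq Fv NC1 NC4 with h | h | h | h | h | h
  · have l1 := loc_R p q A B a1 b1 hq0 hq h Fv.1 NC2 NC3 Fu1 cr1
    have l2 := loc_R p q A B a2 b2 hq0 hq h Fv.1 NC2 NC3 Fu2 cr2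
    unfold DFw at *; omega
  · have l1 := loc_L p q A B a1 b1 hq0 hq h Fv.1 NC5 NC6 Fu1 cr1
    have l2 := loc_L p q A B a2 b2 hq0 hq h Fv.1 NC5 NC6 Fu2 cr2
    unfold DFw at *; omega
  · have l1 := loc_UR p q A B a1 b1 hq0 hq h Fv.1 NC2 Fu1 cr1
    have l2 := loc_UR p q A B a2 b2 hq0 hq h Fv.1 NC2 Fu2 cr2
    unfold DFw at *; omega
  · have l1 := loc_UL p q A B a1 b1 hq0 hq h Fv.1 NC6 Fu1 cr1
    have l2 := loc_UL p q A B a2 b2 hq0 hq h Fv.1 NC6 Fu2 cr2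
    unfold DFw at *; omega
  · have l1 := loc_DR p q A B a1 b1 hq0 hq h Fv.1 NC3 Fu1 cr1
    have l2 := loc_DR p q A B a2 b2 hq0 hq h Fv.1 NC3 Fu2 cr2
    unfold DFw at *; omega
  · have l1 := loc_DL p q A B a1 b1 hq0 hq h Fv.1 NC5 Fu1 cr1
    have l2 := loc_DL p q A B a2 b2 hq0 hq h Fv.1 NC5 Fu2 cr2
    unfold DFw at *; omega


/-- The color of a non-corner vertex of `F_{x,p-q}` is reused at most once in `F_{x,p+q+1}`. -/
theorem noncorner_reuse_at_most_once (i j : ℤ) (hx : (i + j) % 2 = 0)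
    (p q : ℕ) (hp : 5 ≤ p) (hq : q ≤ p - 3)
    (v : ℤ × ℤ) (hv1 : TH.dist (i, j) v = p - q) (hv2 : v ∉ corners (i, j) (p - q))
    (f : ℤ × ℤ → ℕ) (hf : IsDistColoring (2*p) f) :
    {u : ℤ × ℤ | TH.dist (i, j) u = p + q + 1 ∧ f u = f v}.encard ≤ 1 := by
  rw [Set.encard_le_one_iff]
  intro u1 u2 hu1 hu2
  by_contra hne
  simp only [Set.mem_setOf_eq] at hu1 hu2
  obtain ⟨v1, v2⟩ := v
  obtain ⟨u11, u12⟩ := u1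
  obtain ⟨u21, u22⟩ := u2
  obtain ⟨hd1, hc1⟩ := hu1
  obtain ⟨hd2, hc2⟩ := hu2
  -- basic inequalities
  have hq3 : q + 3 ≤ p := by omega
  -- the three distance lower bounds from the coloring
  have hne1 : (u11, u12) ≠ (v1, v2) := by
    intro h; rw [h, hv1] at hd1; omega
  have hne2 : (u21, u22) ≠ (v1, v2) := by
    intro h; rw [h, hv1] at hd2; omega
  have hge1 : ¬ TH.dist (u11, u12) (v1, v2) ≤ 2*p := fun hle => hf _ _ hne1 hle hc1
  have hge2 : ¬ TH.dist (u21, u22) (v1, v2) ≤ 2*p := fun hle => hf _ _ hne2 hle hc2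
  have hge12 : ¬ TH.dist (u11, u12) (u21, u22) ≤ 2*p :=
    fun hle => hf _ _ hne hle (hc1.trans hc2.symm)
  -- triangle upper bounds give exact cross distances
  have htri1 : TH.dist (u11, u12) (v1, v2) ≤
      TH.dist (u11, u12) (i, j) + TH.dist (i, j) (v1, v2) := TH_connected.dist_triangle
  have htri2 : TH.dist (u21, u22) (v1, v2) ≤
      TH.dist (u21, u22) (i, j) + TH.dist (i, j) (v1, v2) := TH_connected.dist_triangle
  have hcm1 : TH.dist (u11, u12) (i, j) = TH.dist (i, j) (u11, u12) := SimpleGraph.dist_comm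
  have hcm2 : TH.dist (u21, u22) (i, j) = TH.dist (i, j) (u21, u22) := SimpleGraph.dist_comm
  have hceq1 : TH.dist (u11, u12) (v1, v2) = 2*p+1 := by omega
  have hceq2 : TH.dist (u21, u22) (v1, v2) = 2*p+1 := by omega
  -- D-form of the radial distances
  have hDv : D (v1 - i) (v2 - j) = p - q :=
    (dist_formula0 (i, j) (v1, v2) hx).symm.trans hv1
  have hDu1 : D (u11 - i) (u12 - j) = p + q + 1 :=
    (dist_formula0 (i, j) (u11, u12) hx).symm.trans hd1
  have hDu2 : D (u21 - i) (u22 - j) = p + q + 1 :=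
    (dist_formula0 (i, j) (u21, u22) hx).symm.trans hd2
  have Fv : DF (v1 - i) (v2 - j) ((p : ℤ) - q) := by
    have h := (D_eq_iff _ _ _).mp hDv
    have hc : ((p - q : ℕ) : ℤ) = (p : ℤ) - q := by omega
    rwa [hc] at h
  have Fu1 : DF (u11 - i) (u12 - j) ((p : ℤ) + q + 1) := by
    have h := (D_eq_iff _ _ _).mp hDu1
    have hc : ((p + q + 1 : ℕ) : ℤ) = (p : ℤ) + q + 1 := by push_cast; ring
    rwa [hc] at h
  have Fu2 : DF (u21 - i) (u22 - j) ((p : ℤ) + q + 1) := by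
    have h := (D_eq_iff _ _ _).mp hDu2
    have hc : ((p + q + 1 : ℕ) : ℤ) = (p : ℤ) + q + 1 := by push_cast; ring
    rwa [hc] at h
  -- non-corner conditions in coordinates
  simp only [corners, Set.mem_insert_iff, Set.mem_singleton_iff, Prod.mk.injEq, not_or] at hv2
  obtain ⟨w1, w2, w3, w4, w5, w6⟩ := hv2
  have NC1 : ¬(v1 - i = 0 ∧ v2 - j = (p:ℤ) - q) := by clear * - w1 hp hq3; omega
  have NC2 : ¬(v1 - i = ((p:ℤ)-q+1)/2 ∧ v2 - j = ((p:ℤ)-q)/2) := by clear * - w2 hp hq3; omega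
  have NC3 : ¬(v1 - i = ((p:ℤ)-q+1)/2 ∧ v2 - j = -(((p:ℤ)-q)/2)) := by clear * - w3 hp hq3; omega
  have NC4 : ¬(v1 - i = 0 ∧ v2 - j = -((p:ℤ) - q)) := by clear * - w4 hp hq3; omega
  have NC5 : ¬(v1 - i = -(((p:ℤ)-q)/2) ∧ v2 - j = -(((p:ℤ)-q+1)/2)) := by clear * - w5 hp hq3; omega
  have NC6 : ¬(v1 - i = -(((p:ℤ)-q)/2) ∧ v2 - j = ((p:ℤ)-q+1)/2) := by clear * - w6 hp hq3; omega
  -- parity of the u's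
  have hparu1 : (u11 + u12) % 2 = ((p : ℤ) + q + 1) % 2 := by
    have h := Fu1.1; unfold DFw at h; omega
  have hparu2 : (u21 + u22) % 2 = ((p : ℤ) + q + 1) % 2 := by
    have h := Fu2.1; unfold DFw at h; omega
  rcases Int.emod_two_eq_zero_or_one ((p : ℤ) + q + 1) with hE | hO
  · -- u's are right (even) vertices
    have hpe1 : ((u11, u12).1 + (u11, u12).2) % 2 = 0 := by dsimp only; omega
    have hpe2 : ((u21, u22).1 + (u21, u22).2) % 2 = 0 := by dsimp only; omega
    have hcd1 : D (v1 - u11) (v2 - u12) = 2*p+1 :=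
      (dist_formula0 (u11, u12) (v1, v2) hpe1).symm.trans hceq1
    have hcd2 : D (v1 - u21) (v2 - u22) = 2*p+1 :=
      (dist_formula0 (u21, u22) (v1, v2) hpe2).symm.trans hceq2
    have crD1 : DF (v1 - u11) (v2 - u12) (2*(p : ℤ)+1) := by
      have h := (D_eq_iff _ _ _).mp hcd1
      have hc : ((2*p + 1 : ℕ) : ℤ) = 2*(p : ℤ) + 1 := by push_cast; ring
      rwa [hc] at h
    have crD2 : DF (v1 - u21) (v2 - u22) (2*(p : ℤ)+1) := by
      have h := (D_eq_iff _ _ _).mp hcd2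
      have hc : ((2*p + 1 : ℕ) : ℤ) = 2*(p : ℤ) + 1 := by push_cast; ring
      rwa [hc] at h
    have crArg1 : DF ((v1-i) - (u11-i)) ((v2-j) - (u12-j)) (2*(p : ℤ)+1) := by
      rw [show (v1-i) - (u11-i) = v1 - u11 from by ring,
          show (v2-j) - (u12-j) = v2 - u12 from by ring]
      exact crD1
    have crArg2 : DF ((v1-i) - (u21-i)) ((v2-j) - (u22-j)) (2*(p : ℤ)+1) := by
      rw [show (v1-i) - (u21-i) = v1 - u21 from by ring,
          show (v2-j) - (u22-j) = v2 - u22 from by ring]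
      exact crD2
    have hbk := bigkey p q (v1-i) (v2-j) (u11-i) (u12-j) (u21-i) (u22-j)
      (by omega) (by omega) Fv NC1 NC2 NC3 NC4 NC5 NC6
      Fu1.1 Fu2.1 (Or.inl ⟨hE, crArg1⟩) (Or.inl ⟨hE, crArg2⟩)
    apply hge12
    rw [dist_formula0 (u11, u12) (u21, u22) hpe1]
    apply D_le_of
    have hbw := hbk.1
    clear * - hbw
    unfold DFw at hbw ⊢
    push_cast
    omega
  · -- u's are left (odd) vertices
    have hpo1 : ((u11, u12).1 + (u11, u12).2) % 2 = 1 := by dsimp only; omega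
    have hpo2 : ((u21, u22).1 + (u21, u22).2) % 2 = 1 := by dsimp only; omega
    have hcd1 : D (u11 - v1) (v2 - u12) = 2*p+1 :=
      (dist_formula1 (u11, u12) (v1, v2) hpo1).symm.trans hceq1
    have hcd2 : D (u21 - v1) (v2 - u22) = 2*p+1 :=
      (dist_formula1 (u21, u22) (v1, v2) hpo2).symm.trans hceq2
    have crD1 : DF (u11 - v1) (v2 - u12) (2*(p : ℤ)+1) := by
      have h := (D_eq_iff _ _ _).mp hcd1
      have hc : ((2*p + 1 : ℕ) : ℤ) = 2*(p : ℤ) + 1 := by push_cast; ring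
      rwa [hc] at h
    have crD2 : DF (u21 - v1) (v2 - u22) (2*(p : ℤ)+1) := by
      have h := (D_eq_iff _ _ _).mp hcd2
      have hc : ((2*p + 1 : ℕ) : ℤ) = 2*(p : ℤ) + 1 := by push_cast; ring
      rwa [hc] at h
    have crArg1 : DF ((u11-i) - (v1-i)) ((v2-j) - (u12-j)) (2*(p : ℤ)+1) := by
      rw [show (u11-i) - (v1-i) = u11 - v1 from by ring,
          show (v2-j) - (u12-j) = v2 - u12 from by ring]
      exact crD1
    have crArg2 : DF ((u21-i) - (v1-i)) ((v2-j) - (u22-j)) (2*(p : ℤ)+1) := by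
      rw [show (u21-i) - (v1-i) = u21 - v1 from by ring,
          show (v2-j) - (u22-j) = v2 - u22 from by ring]
      exact crD2
    have hbk := bigkey p q (v1-i) (v2-j) (u11-i) (u12-j) (u21-i) (u22-j)
      (by omega) (by omega) Fv NC1 NC2 NC3 NC4 NC5 NC6
      Fu1.1 Fu2.1 (Or.inr ⟨hO, crArg1⟩) (Or.inr ⟨hO, crArg2⟩)
    apply hge12
    rw [dist_formula1 (u11, u12) (u21, u22) hpo1]
    apply D_le_of
    have hbw := hbk.2
    clear * - hbw
    unfold DFw at hbw ⊢
    push_cast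
    omega
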